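/- Let l, m₁, ρ be real numbers with l > 0, m₁ > 0, ρ > 0. For b ∈ (0, l) let g_b(λ) = sin(λl)/λ − (m₁/ρ)·sin(λb)·sin(λ(l−b)) and let Λ(b) = sInf {λ : ℝ | λ > 0 ∧ g_b(λ) = 0} be the first eigenvalue of the continuous-discrete problem with the load at position b. Then Λ(l/2) ≤ Λ(b) for every b ∈ (0, l); i.e., the first eigenvalue is smallest when the single discrete mass is located in the middle of the integration interval. -/

import Mathlib

open Real Set

lemma sin_div_tendsto (l : ℝ) :
    Filter.Tendsto (fun μ : ℝ => Real.sin (μ * l) / μ) (nhdsWithin 0 (Ioi 0)) (nhds l) := by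
  have hd : HasDerivAt (fun μ : ℝ => Real.sin (μ * l)) l 0 := by
    have h1 : HasDerivAt (fun μ : ℝ => μ * l) l 0 := by
      simpa using (hasDerivAt_id (0:ℝ)).mul_const l
    have h2 := (Real.hasDerivAt_sin (0 * l)).comp 0 h1
    simpa [Function.comp_def] using h2
  have := hasDerivAt_iff_tendsto_slope.mp hd
  have h3 : Filter.Tendsto (slope (fun μ : ℝ => Real.sin (μ * l)) 0)
      (nhdsWithin 0 (Ioi 0)) (nhds l) :=
    this.mono_left (nhdsWithin_mono 0 (fun x hx => ne_of_gt hx))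
  refine h3.congr' ?_
  filter_upwards [self_mem_nhdsWithin] with x hx
  have hx0 : (x:ℝ) ≠ 0 := ne_of_gt hx
  simp [slope, hx0, div_eq_inv_mul]

/-- If g_b is ≤ 0 at some positive λ, it has a root in (0, λ]. -/
lemma exists_root (l c b lam : ℝ) (hl : 0 < l) (hlam : 0 < lam)
    (hneg : Real.sin (lam * l) / lam - c * Real.sin (lam * b) * Real.sin (lam * (l - b)) ≤ 0) :
    ∃ x : ℝ, 0 < x ∧ x ≤ lam ∧
      Real.sin (x * l) / x - c * Real.sin (x * b) * Real.sin (x * (l - b)) = 0 := by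
  set f : ℝ → ℝ := fun μ => Real.sin (μ * l) / μ - c * Real.sin (μ * b) * Real.sin (μ * (l - b))
    with hf
  -- f tends to l at 0⁺
  have htend : Filter.Tendsto f (nhdsWithin 0 (Ioi 0)) (nhds l) := by
    have h1 := sin_div_tendsto l
    have h2 : Filter.Tendsto (fun μ : ℝ => c * Real.sin (μ * b) * Real.sin (μ * (l - b)))
        (nhdsWithin 0 (Ioi 0)) (nhds 0) := by
      have : Filter.Tendsto (fun μ : ℝ => c * Real.sin (μ * b) * Real.sin (μ * (l - b)))
          (nhds 0) (nhds (c * Real.sin (0 * b) * Real.sin (0 * (l - b)))) := by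
        apply Continuous.tendsto
        continuity
      simpa using this.mono_left nhdsWithin_le_nhds
    simpa using h1.sub h2
  -- find μ₀ ∈ (0, lam) with f μ₀ > 0
  have hev : ∀ᶠ μ in nhdsWithin 0 (Ioi 0), f μ > 0 := htend.eventually (eventually_gt_nhds hl)
  have hev2 : Ioo (0:ℝ) lam ∈ nhdsWithin 0 (Ioi 0) :=
    Ioo_mem_nhdsGT_of_mem ⟨le_refl 0, hlam⟩
  have hne : (nhdsWithin (0:ℝ) (Ioi 0)).NeBot := nhdsGT_neBot 0
  obtain ⟨μ₀, hμ₀f, hμ₀mem⟩ := (hev.and (Filter.eventually_of_mem hev2 (fun x hx => hx))).exists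
  obtain ⟨hμ₀pos, hμ₀lt⟩ := hμ₀mem
  -- continuity on [μ₀, lam]
  have hcont : ContinuousOn f (Icc μ₀ lam) := by
    apply ContinuousOn.sub
    · apply ContinuousOn.div
      · exact (Real.continuous_sin.comp (continuous_id.mul continuous_const)).continuousOn
      · exact continuousOn_id
      · intro x hx
        exact ne_of_gt (lt_of_lt_of_le hμ₀pos hx.1)
    · exact (((continuous_const.mul
        (Real.continuous_sin.comp (continuous_id.mul continuous_const))).mul
        (Real.continuous_sin.comp (continuous_id.mul continuous_const)))).continuousOn
  have hsub := intermediate_value_Icc' (le_of_lt hμ₀lt) hcont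
  have h0 : (0:ℝ) ∈ Icc (f lam) (f μ₀) := ⟨hneg, le_of_lt hμ₀f⟩
  obtain ⟨x, hxmem, hxval⟩ := hsub h0
  exact ⟨x, lt_of_lt_of_le hμ₀pos hxmem.1, hxmem.2, hxval⟩

/-- Pointwise inequality: the middle position minimizes g. -/
lemma g_half_le (l c b lam : ℝ) (_hc : 0 ≤ c) :
    Real.sin (lam * (l/2)) * Real.sin (lam * (l - l/2))
      ≥ Real.sin (lam * b) * Real.sin (lam * (l - b)) := by
  have e1 : Real.sin (lam * b) * Real.sin (lam * (l - b))
      = (Real.cos (lam * b - lam * (l - b)) - Real.cos (lam * l)) / 2 := by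
    have h1 := Real.cos_sub (lam * b) (lam * (l - b))
    have h2 : Real.cos (lam * l) = Real.cos (lam * b + lam * (l - b)) := by ring_nf
    rw [h2, Real.cos_add, h1]; ring
  have e2 : Real.sin (lam * (l/2)) * Real.sin (lam * (l - l/2))
      = (1 - Real.cos (lam * l)) / 2 := by
    have h2 : Real.cos (lam * l) = Real.cos (lam * (l/2) + lam * (l - l/2)) := by ring_nf
    have h3 : lam * (l - l/2) = lam * (l/2) := by ring
    rw [h2, Real.cos_add, h3]
    have := Real.sin_sq_add_cos_sq (lam * (l/2))
    nlinarith
  rw [e1, e2]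
  have := Real.cos_le_one (lam * b - lam * (l - b))
  linarith

/-- The first eigenvalue of the cable with one discrete load is smallest
when the load is located in the middle of the integration interval. -/
theorem middle_mass_minimizes_first_eigenvalue
    (l m₁ ρ : ℝ) (hl : 0 < l) (hm : 0 < m₁) (hρ : 0 < ρ)
    (Λ : ℝ → ℝ)
    (hΛ : ∀ b : ℝ, Λ b = sInf {lam : ℝ | lam > 0 ∧
      Real.sin (lam * l) / lam
        - (m₁ / ρ) * Real.sin (lam * b) * Real.sin (lam * (l - b)) = 0}) :
    ∀ b ∈ Ioo (0 : ℝ) l, Λ (l / 2) ≤ Λ b := by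
  intro b hb
  obtain ⟨hb0, hbl⟩ := hb
  have hc : (0:ℝ) < m₁ / ρ := div_pos hm hρ
  set c := m₁ / ρ
  set S : ℝ → Set ℝ := fun b' => {lam : ℝ | lam > 0 ∧
      Real.sin (lam * l) / lam - c * Real.sin (lam * b') * Real.sin (lam * (l - b')) = 0}
    with hS
  -- S b is nonempty: g_b(π/l) ≤ 0 gives a root
  have hSb_ne : (S b).Nonempty := by
    have hπl : (0:ℝ) < Real.pi / l := div_pos Real.pi_pos hl
    have hval : Real.sin ((Real.pi / l) * l) / (Real.pi / l)
        - c * Real.sin ((Real.pi / l) * b) * Real.sin ((Real.pi / l) * (l - b)) ≤ 0 := by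
      have h1 : (Real.pi / l) * l = Real.pi := by field_simp
      rw [h1, Real.sin_pi]
      have hs1 : 0 < Real.sin ((Real.pi / l) * b) := by
        apply Real.sin_pos_of_pos_of_lt_pi
        · positivity
        · rw [div_mul_eq_mul_div, mul_comm]
          rw [div_lt_iff₀ hl]
          nlinarith [Real.pi_pos]
      have hs2 : 0 < Real.sin ((Real.pi / l) * (l - b)) := by
        apply Real.sin_pos_of_pos_of_lt_pi
        · have : 0 < l - b := by linarith
          positivity
        · rw [div_mul_eq_mul_div, mul_comm]
          have : (l - b) * Real.pi / l < Real.pi := by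
            rw [div_lt_iff₀ hl]
            nlinarith [Real.pi_pos]
          exact this
      have : 0 < c * Real.sin ((Real.pi / l) * b) * Real.sin ((Real.pi / l) * (l - b)) := by
        positivity
      simp only [zero_div]
      linarith
    obtain ⟨x, hx0, _, hxeq⟩ := exists_root l c b (Real.pi / l) hl hπl hval
    exact ⟨x, hx0, hxeq⟩
  -- bddBelow of S (l/2)
  have hbdd : BddBelow (S (l/2)) := ⟨0, fun x hx => le_of_lt hx.1⟩
  rw [hΛ, hΛ]
  apply le_csInf hSb_ne
  intro lam hlam
  obtain ⟨hlam0, hlameq⟩ := hlam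
  -- g_{l/2}(lam) ≤ g_b(lam) = 0
  have hineq : Real.sin (lam * l) / lam
      - c * Real.sin (lam * (l/2)) * Real.sin (lam * (l - l/2)) ≤ 0 := by
    have h := g_half_le l c b lam (le_of_lt hc)
    have := mul_le_mul_of_nonneg_left h (le_of_lt hc)
    nlinarith
  obtain ⟨x, hx0, hxle, hxeq⟩ := exists_root l c (l/2) lam hl hlam0 hineq
  have hxmem : x ∈ S (l/2) := ⟨hx0, hxeq⟩
  exact le_trans (csInf_le hbdd hxmem) hxle
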